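/- Suppose the self-consistency assumption holds coordinate-wise for u_1, ..., u_n ∈ Fin L^k with target v, and suppose in every coordinate t the plurality value v^t is attained by strictly more than n/2 of the generations (majority, not just plurality). Then the coordinate-wise majority vector m, defined by m^t = the value attained by more than half the u_i^t, equals v; and if some u_b = v, then u_b strictly maximizes Σ_{j≠i} a(u_i, u_j) over all i whose vector differs from v in at least one coordinate where the majority margin exceeds 1. -/
import Mathlib


/-- Fractional agreement `a(x,y) = (1/k) Σ_t 𝟙[x t = y t]`. -/
noncomputable def fracAgree {k L : ℕ} (x y : Fin k → Fin L) : ℝ :=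
  (∑ t : Fin k, if x t = y t then (1 : ℝ) else 0) / k

/-- Count of generations taking value `j` in coordinate `t`. -/
def cnt {n k L : ℕ} (u : Fin n → Fin k → Fin L) (t : Fin k) (j : Fin L) : ℕ :=
  (Finset.univ.filter (fun i => u i t = j)).card

lemma cnt_add_le {n k L : ℕ} (u : Fin n → Fin k → Fin L) (t : Fin k) {j j' : Fin L}
    (h : j ≠ j') : cnt u t j + cnt u t j' ≤ n := by
  classical
  have hd : Disjoint (Finset.univ.filter (fun i => u i t = j))
      (Finset.univ.filter (fun i => u i t = j')) := by
    rw [Finset.disjoint_left]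
    intro i h1 h2
    rw [Finset.mem_filter] at h1 h2
    exact h (h1.2.symm.trans h2.2)
  calc cnt u t j + cnt u t j'
      = ((Finset.univ.filter (fun i => u i t = j)) ∪
          (Finset.univ.filter (fun i => u i t = j'))).card :=
        (Finset.card_union_of_disjoint hd).symm
    _ ≤ (Finset.univ : Finset (Fin n)).card :=
        Finset.card_le_card (Finset.union_subset (Finset.filter_subset _ _)
          (Finset.filter_subset _ _))
    _ = n := by simp

lemma sum_frac {n k L : ℕ} (u : Fin n → Fin k → Fin L) (i : Fin n) :
    ∑ j ∈ Finset.univ.erase i, fracAgree (u i) (u j)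
      = (∑ t : Fin k, ((cnt u t (u i t) : ℝ) - 1)) / k := by
  classical
  unfold fracAgree
  rw [← Finset.sum_div]
  congr 1
  rw [Finset.sum_comm]
  refine Finset.sum_congr rfl fun t _ => ?_
  rw [Finset.sum_erase_eq_sub (Finset.mem_univ i), if_pos rfl]
  congr 1
  simp [cnt, Finset.sum_boole, eq_comm]

/-- if in every coordinate `v t` is attained by strictly more than half of
the generations, then any coordinate-wise majority vector `m` equals `v`; and if some
`u b = v`, then `b` strictly dominates (in total agreement `T`) any generation differing
from `v` in some coordinate whose majority margin exceeds 1. -/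
theorem stmt10 {n k L : ℕ} (u : Fin n → Fin k → Fin L) (v m : Fin k → Fin L)
    (hmajv : ∀ t : Fin k, n < 2 * cnt u t (v t))
    (hmajm : ∀ t : Fin k, n < 2 * cnt u t (m t)) :
    m = v ∧
    (∀ b : Fin n, u b = v → ∀ i : Fin n,
      (∃ t : Fin k, u i t ≠ v t ∧
        ((Finset.univ.erase (v t)).sup (cnt u t)) + 1 < cnt u t (v t)) →
      ∑ j ∈ Finset.univ.erase i, fracAgree (u i) (u j) <
        ∑ j ∈ Finset.univ.erase b, fracAgree (u b) (u j)) := by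
  classical
  constructor
  · funext t
    by_contra h
    have h1 := cnt_add_le u t h
    have h2 := hmajv t
    have h3 := hmajm t
    omega
  · rintro b hb i ⟨t0, ht0ne, ht0⟩
    have hk : (0 : ℝ) < k := by
      exact_mod_cast Fin.pos t0
    rw [sum_frac, sum_frac, hb]
    rw [div_lt_div_iff_of_pos_right hk]
    refine Finset.sum_lt_sum (fun t _ => ?_) ⟨t0, Finset.mem_univ _, ?_⟩
    · have : cnt u t (u i t) ≤ cnt u t (v t) := by
        by_cases hc : u i t = v t
        · rw [hc]
        · have := cnt_add_le u t hc
          have := hmajv t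
          omega
      have : (cnt u t (u i t) : ℝ) ≤ cnt u t (v t) := by exact_mod_cast this
      linarith
    · have hmem : u i t0 ∈ Finset.univ.erase (v t0) :=
        Finset.mem_erase.mpr ⟨ht0ne, Finset.mem_univ _⟩
      have hle : cnt u t0 (u i t0) ≤ (Finset.univ.erase (v t0)).sup (cnt u t0) :=
        Finset.le_sup hmem
      have : cnt u t0 (u i t0) < cnt u t0 (v t0) := by omega
      have : (cnt u t0 (u i t0) : ℝ) < cnt u t0 (v t0) := by exact_mod_cast this
      linarith
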